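/- (Quantitative maximum principle) Let N ≥ 3 be odd, σ ∈ (2/N², 1), k ≥ 0. Suppose w : ℝ² → [0,∞) is C² with Δw ≥ f, where 0 ≤ f ≤ 1 everywhere and for every x ∈ ℝ² and i ∈ {0,...,k}, (1/N^{2i})∫_{Q_{N^i}(x)} f ≥ σ^i/2. Then there is a universal constant C > 0 such that for every x ∈ ℝ², w(x) ≤ max_{∂Q_{N^{k+1}}(x)} w − C·σ^k·N^{2k+2}. -/

import Mathlib

open MeasureTheory

noncomputable def pdx (f : ℝ × ℝ → ℝ) (p : ℝ × ℝ) : ℝ := fderiv ℝ f p (1, 0)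
noncomputable def pdy (f : ℝ × ℝ → ℝ) (p : ℝ × ℝ) : ℝ := fderiv ℝ f p (0, 1)
noncomputable def lap (f : ℝ × ℝ → ℝ) (p : ℝ × ℝ) : ℝ :=
  pdx (pdx f) p + pdy (pdy f) p

/-- The axis-parallel square of side `r` centered at `x`. -/
def sqQ (r : ℝ) (x : ℝ × ℝ) : Set (ℝ × ℝ) :=
  Set.Icc (x.1 - r / 2) (x.1 + r / 2) ×ˢ Set.Icc (x.2 - r / 2) (x.2 + r / 2)

/-! Auxiliary development. -/

open Real Set Filter Topology

/-- Euclidean disc of radius `L` centered at the origin. -/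
def EB (L : ℝ) : Set (ℝ × ℝ) := {p : ℝ × ℝ | p.1 ^ 2 + p.2 ^ 2 < L ^ 2}

lemma EB_open (L : ℝ) : IsOpen (EB L) := by
  have : Continuous fun p : ℝ × ℝ => p.1 ^ 2 + p.2 ^ 2 := by continuity
  exact isOpen_lt this continuous_const

lemma EB_meas (L : ℝ) : MeasurableSet (EB L) := (EB_open L).measurableSet

lemma EB_subset_square {L : ℝ} (hL : 0 ≤ L) : EB L ⊆ Icc (-L) L ×ˢ Icc (-L) L := by
  rintro ⟨a, b⟩ h
  simp only [EB, mem_setOf_eq] at h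
  have ha : a ^ 2 ≤ L ^ 2 := by nlinarith [sq_nonneg b]
  have hb : b ^ 2 ≤ L ^ 2 := by nlinarith [sq_nonneg a]
  refine ⟨⟨?_, ?_⟩, ?_, ?_⟩ <;>
    simp only [] <;>
    nlinarith [sq_nonneg (a - L), sq_nonneg (a + L), sq_nonneg (b - L), sq_nonneg (b + L)]

lemma EB_bounded (L : ℝ) : Bornology.IsBounded (EB L) := by
  have h : EB L = EB |L| := by
    ext p; simp only [EB, mem_setOf_eq, sq_abs]
  rw [h]
  exact (Metric.isBounded_Icc _ _ |>.prod (Metric.isBounded_Icc _ _)).subset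
      (EB_subset_square (abs_nonneg L))

lemma EB_vol_lt_top (L : ℝ) : volume (EB L) < ⊤ := (EB_bounded L).measure_lt_top

/-- Integrability of a continuous function on a bounded measurable set. -/
lemma cont_integrableOn {g : ℝ × ℝ → ℝ} (hg : Continuous g) {s : Set (ℝ × ℝ)}
    (hb : Bornology.IsBounded s) : IntegrableOn g s volume :=
  ((hg.continuousOn).integrableOn_compact hb.isCompact_closure).mono_set subset_closure

/-- Integrability of a bounded measurable function on a set of finite volume. -/
lemma bdd_integrableOn {g : ℝ × ℝ → ℝ} (hg : Measurable g) {C : ℝ}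
    (hC : ∀ p, |g p| ≤ C) {s : Set (ℝ × ℝ)} (hs : volume s < ⊤) :
    IntegrableOn g s volume := by
  refine Integrable.mono' (g := fun _ => C) ?_ (hg.aestronglyMeasurable) ?_
  · exact integrableOn_const hs.ne
  · exact Filter.Eventually.of_forall fun p => hC p

/-- Second derivative test: at an interior local maximum the second derivative is `≤ 0`. -/
lemma second_deriv_test {φ ψ : ℝ → ℝ} {c : ℝ}
    (hφ : ∀ t, HasDerivAt φ (ψ t) t) (hψ : HasDerivAt ψ c 0)
    (hmax : IsLocalMax φ 0) : c ≤ 0 := by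
  by_contra hc
  push_neg at hc
  have hψ0 : ψ 0 = 0 := hmax.hasDerivAt_eq_zero (hφ 0)
  -- slope of ψ at 0 tends to c > 0, so ψ > 0 on a right neighborhood
  have hslope := hasDerivAt_iff_tendsto_slope.1 hψ
  have hev : ∀ᶠ t in 𝓝[>] (0:ℝ), c / 2 < slope ψ 0 t := by
    have h2 : c / 2 < c := by linarith
    have := hslope.eventually (eventually_gt_nhds h2)
    exact nhdsWithin_mono (0:ℝ) (fun t (ht : t ∈ Ioi (0:ℝ)) => ne_of_gt ht) this
  obtain ⟨u, hu, hIoo⟩ := mem_nhdsGT_iff_exists_Ioo_subset.1 hev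
  have hu0 : (0:ℝ) < u := hu
  have hψpos : ∀ t ∈ Ioo (0:ℝ) u, 0 < ψ t := by
    intro t ht
    have hm := hIoo ht
    simp only [mem_setOf_eq] at hm
    have hslope' : slope ψ 0 t = ψ t / t := by
      rw [slope_def_field, hψ0]
      ring_nf
    rw [hslope'] at hm
    have h0 : 0 < ψ t / t := lt_trans (by positivity) hm
    exact (div_pos_iff.1 h0).resolve_right (fun h => absurd ht.1 (not_lt.2 h.2.le)) |>.1
  -- φ is strictly monotone on [0, u/2]
  have hmono : StrictMonoOn φ (Icc (0:ℝ) (u/2)) := by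
    apply strictMonoOn_of_deriv_pos (convex_Icc _ _)
    · exact fun t _ => (hφ t).continuousAt.continuousWithinAt
    · intro t ht
      rw [interior_Icc] at ht
      rw [(hφ t).deriv]
      exact hψpos t ⟨ht.1, lt_trans ht.2 (by linarith)⟩
  -- contradiction with local max
  have hfreq : ∀ᶠ t in 𝓝[>] (0:ℝ), φ t ≤ φ 0 :=
    nhdsWithin_le_nhds hmax
  have hgt : ∀ᶠ t in 𝓝[>] (0:ℝ), φ 0 < φ t := by
    have hIoo2 : Ioo (0:ℝ) (u/2) ∈ 𝓝[>] (0:ℝ) :=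
      Ioo_mem_nhdsGT_of_mem ⟨le_refl _, by linarith⟩
    filter_upwards [hIoo2] with t ht
    exact hmono ⟨le_refl _, by linarith [ht.2.le]⟩ ⟨ht.1.le, ht.2.le⟩ ht.1
  obtain ⟨t, h1, h2⟩ := (hfreq.and hgt).exists
  linarith

/-- Data certifying enough C² structure of `V` for the maximum principle. -/
structure QD (V : ℝ × ℝ → ℝ) where
  D : ℝ × ℝ → (ℝ × ℝ) →L[ℝ] ℝ
  Dxx : ℝ × ℝ → ℝ
  Dyy : ℝ × ℝ → ℝ
  hD : ∀ p, HasFDerivAt V (D p) p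
  hxx : ∀ p, HasDerivAt (fun t : ℝ => D (p + (t, 0)) (1, 0)) (Dxx p) 0
  hyy : ∀ p, HasDerivAt (fun t : ℝ => D (p + (0, t)) (0, 1)) (Dyy p) 0

lemma lineX_hasDerivAt (p : ℝ × ℝ) (t : ℝ) :
    HasDerivAt (fun s : ℝ => p + (s, (0:ℝ))) ((1:ℝ), (0:ℝ)) t := by
  have h : HasDerivAt (fun s : ℝ => ((s : ℝ), (0:ℝ))) ((1:ℝ), (0:ℝ)) t :=
    (hasDerivAt_id t).prodMk (hasDerivAt_const t 0)
  exact h.const_add p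

lemma lineY_hasDerivAt (p : ℝ × ℝ) (t : ℝ) :
    HasDerivAt (fun s : ℝ => p + ((0:ℝ), s)) ((0:ℝ), (1:ℝ)) t := by
  have h : HasDerivAt (fun s : ℝ => ((0:ℝ), (s : ℝ))) ((0:ℝ), (1:ℝ)) t :=
    (hasDerivAt_const t 0).prodMk (hasDerivAt_id t)
  exact h.const_add p

/-- Maximum principle: a function with strictly positive Laplacian-data on a closed square
attains its maximum over the square on the frontier. -/
lemma max_principle {V : ℝ × ℝ → ℝ} (Q : QD V) {ρ : ℝ} (hρ : 0 < ρ) (x : ℝ × ℝ)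
    (hlap : ∀ p, 0 < Q.Dxx p + Q.Dyy p) :
    ∃ y ∈ frontier (sqQ ρ x), ∀ p ∈ sqQ ρ x, V p ≤ V y := by
  have hScomp : IsCompact (sqQ ρ x) := (isCompact_Icc.prod isCompact_Icc)
  have hSclosed : IsClosed (sqQ ρ x) := (isClosed_Icc.prod isClosed_Icc)
  have hSne : (sqQ ρ x).Nonempty := ⟨x, by
    constructor <;> constructor <;> simp <;> linarith⟩
  have hVcont : ContinuousOn V (sqQ ρ x) :=
    fun p _ => ((Q.hD p).continuousAt).continuousWithinAt
  obtain ⟨p, hpS, hpmax⟩ := hScomp.exists_isMaxOn hSne hVcont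
  by_cases hpint : p ∈ interior (sqQ ρ x)
  · exfalso
    have hlocal : IsLocalMax V p := hpmax.isLocalMax (mem_interior_iff_mem_nhds.1 hpint)
    -- X direction
    have hmaxX : IsLocalMax (fun t : ℝ => V (p + (t, 0))) 0 := by
      have hcont : Filter.Tendsto (fun t : ℝ => p + (t, (0:ℝ))) (𝓝 0) (𝓝 p) := by
        have hc : Continuous (fun t : ℝ => p + (t, (0:ℝ))) := by continuity
        exact hc.tendsto' 0 p (by simp)
      have := hcont.eventually hlocal
      simpa [IsLocalMax, IsMaxFilter, Prod.mk_zero_zero] using this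
    have hmaxY : IsLocalMax (fun t : ℝ => V (p + (0, t))) 0 := by
      have hcont : Filter.Tendsto (fun t : ℝ => p + ((0:ℝ), t)) (𝓝 0) (𝓝 p) := by
        have hc : Continuous (fun t : ℝ => p + ((0:ℝ), t)) := by continuity
        exact hc.tendsto' 0 p (by simp)
      have := hcont.eventually hlocal
      simpa [IsLocalMax, IsMaxFilter, Prod.mk_zero_zero] using this
    have hX : Q.Dxx p ≤ 0 := by
      refine second_deriv_test (ψ := fun t => Q.D (p + (t, 0)) (1, 0)) ?_ ?_ hmaxX
      · intro t
        have := (Q.hD (p + (t, 0))).comp_hasDerivAt t (lineX_hasDerivAt p t)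
        simpa [Function.comp_def] using this
      · simpa using Q.hxx p
    have hY : Q.Dyy p ≤ 0 := by
      refine second_deriv_test (ψ := fun t => Q.D (p + (0, t)) (0, 1)) ?_ ?_ hmaxY
      · intro t
        have := (Q.hD (p + (0, t))).comp_hasDerivAt t (lineY_hasDerivAt p t)
        simpa [Function.comp_def] using this
      · simpa using Q.hyy p
    have := hlap p
    linarith
  · refine ⟨p, ?_, fun q hq => hpmax hq⟩
    rw [hSclosed.frontier_eq]
    exact ⟨hpS, hpint⟩
section Part2

variable {w : ℝ × ℝ → ℝ}

lemma contDiff_pdx (hw : ContDiff ℝ 2 w) : ContDiff ℝ 1 (pdx w) :=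
  (hw.fderiv_right (by norm_num)).clm_apply contDiff_const

lemma contDiff_pdy (hw : ContDiff ℝ 2 w) : ContDiff ℝ 1 (pdy w) :=
  (hw.fderiv_right (by norm_num)).clm_apply contDiff_const

lemma cont_pdxx (hw : ContDiff ℝ 2 w) : Continuous (pdx (pdx w)) :=
  ((contDiff_pdx hw).continuous_fderiv one_ne_zero).clm_apply continuous_const

lemma cont_pdyy (hw : ContDiff ℝ 2 w) : Continuous (pdy (pdy w)) :=
  ((contDiff_pdy hw).continuous_fderiv one_ne_zero).clm_apply continuous_const

lemma cont_lap (hw : ContDiff ℝ 2 w) : Continuous (lap w) :=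
  (cont_pdxx hw).add (cont_pdyy hw)

/-- Generic integrability of continuous functions on bounded sets. -/
lemma contE_integrableOn {E : Type*} [NormedAddCommGroup E] {g : ℝ × ℝ → E}
    (hg : Continuous g) {s : Set (ℝ × ℝ)} (hb : Bornology.IsBounded s) :
    IntegrableOn g s volume :=
  ((hg.continuousOn).integrableOn_compact hb.isCompact_closure).mono_set subset_closure

/-- Differentiation under the integral sign for averages over a bounded set. -/
lemma avg_hasFDerivAt {g : ℝ × ℝ → ℝ} (hg : ContDiff ℝ 1 g) {s : Set (ℝ × ℝ)}
    (hs : MeasurableSet s) (hb : Bornology.IsBounded s) (y₀ : ℝ × ℝ) :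
    HasFDerivAt (fun y => ∫ z in s, g (y + z)) (∫ z in s, fderiv ℝ g (y₀ + z)) y₀ := by
  obtain ⟨R, hR⟩ := hb.subset_closedBall 0
  have hgc : Continuous g := hg.continuous
  have hg' : Continuous (fderiv ℝ g) := hg.continuous_fderiv one_ne_zero
  set K := Metric.closedBall y₀ (1 + max R 0) with hKdef
  have hK : IsCompact K := isCompact_closedBall _ _
  have memK : ∀ y ∈ Metric.ball y₀ 1, ∀ z ∈ s, y + z ∈ K := by
    intro y hy z hz
    have h1 : dist y y₀ < 1 := Metric.mem_ball.1 hy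
    have h2 : ‖z‖ ≤ R := by simpa using Metric.mem_closedBall.1 (hR hz)
    have : dist (y + z) y₀ ≤ dist y y₀ + ‖z‖ := by
      rw [dist_eq_norm, dist_eq_norm]
      calc ‖y + z - y₀‖ = ‖(y - y₀) + z‖ := by ring_nf
        _ ≤ ‖y - y₀‖ + ‖z‖ := norm_add_le _ _
    exact Metric.mem_closedBall.2 (by
      have : dist (y + z) y₀ ≤ 1 + R := by linarith
      exact le_trans this (by simp [le_max_left, le_max_right]))
  obtain ⟨C, hC⟩ := hK.exists_bound_of_continuousOn (hg'.continuousOn)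
  have key := hasFDerivAt_integral_of_dominated_of_fderiv_le
    (F := fun y z => g (y + z)) (F' := fun y z => fderiv ℝ g (y + z))
    (μ := volume.restrict s) (x₀ := y₀) (bound := fun _ => C)
    (s := Metric.ball _ 1) (Metric.ball_mem_nhds _ one_pos)
    (Filter.Eventually.of_forall fun y =>
      ((hgc.comp (continuous_const.add continuous_id)).aestronglyMeasurable))
    (contE_integrableOn (hgc.comp (continuous_const.add continuous_id)) hb)
    ((hg'.comp (continuous_const.add continuous_id)).aestronglyMeasurable)
    ?_ ?_ ?_
  · exact key
  · rw [MeasureTheory.ae_restrict_iff' hs]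
    refine Filter.Eventually.of_forall fun z hz y hy => hC _ (memK y hy z hz)
  · exact MeasureTheory.integrableOn_const hb.measure_lt_top.ne
  · refine Filter.Eventually.of_forall fun z y _ => ?_
    have h := ((hg.differentiable one_ne_zero) (y + z)).hasFDerivAt.comp y
      ((hasFDerivAt_id y).add_const z)
    simpa [Function.comp_def] using h

/-- The integral of a CLM-valued average, applied to a vector. -/
lemma avg_apply_eq {g : ℝ × ℝ → ℝ} (hg : ContDiff ℝ 1 g) {s : Set (ℝ × ℝ)}
    (hb : Bornology.IsBounded s) (y : ℝ × ℝ) (v : ℝ × ℝ) :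
    (∫ z in s, fderiv ℝ g (y + z)) v = ∫ z in s, fderiv ℝ g (y + z) v :=
  ContinuousLinearMap.integral_apply
    (contE_integrableOn ((hg.continuous_fderiv one_ne_zero).comp (continuous_const.add continuous_id)) hb) v

/-- QD data for a C² function. -/
noncomputable def QD_ofC2 (hw : ContDiff ℝ 2 w) : QD w where
  D := fderiv ℝ w
  Dxx := pdx (pdx w)
  Dyy := pdy (pdy w)
  hD p := ((hw.differentiable (by norm_num)) p).hasFDerivAt
  hxx p := by
    have hdx : HasFDerivAt (pdx w) (fderiv ℝ (pdx w) (p + ((0:ℝ), (0:ℝ)))) (p + ((0:ℝ), (0:ℝ))) :=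
      (((contDiff_pdx hw).differentiable one_ne_zero) _).hasFDerivAt
    have h := hdx.comp_hasDerivAt 0 (lineX_hasDerivAt p 0)
    have hp : p + ((0:ℝ), (0:ℝ)) = p := by simp
    rw [hp] at h
    simpa [Function.comp_def, pdx] using h
  hyy p := by
    have hdy : HasFDerivAt (pdy w) (fderiv ℝ (pdy w) (p + ((0:ℝ), (0:ℝ)))) (p + ((0:ℝ), (0:ℝ))) :=
      (((contDiff_pdy hw).differentiable one_ne_zero) _).hasFDerivAt
    have h := hdy.comp_hasDerivAt 0 (lineY_hasDerivAt p 0)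
    have hp : p + ((0:ℝ), (0:ℝ)) = p := by simp
    rw [hp] at h
    simpa [Function.comp_def, pdy] using h

/-- QD data for the quadratic `(p.1-x.1)*(p.1-x.1) + (p.2-x.2)*(p.2-x.2)`. -/
noncomputable def QD_quad (x : ℝ × ℝ) :
    QD (fun p : ℝ × ℝ => (p.1 - x.1) * (p.1 - x.1) + (p.2 - x.2) * (p.2 - x.2)) where
  D p := ((p.1 - x.1) • (ContinuousLinearMap.fst ℝ ℝ ℝ) + (p.1 - x.1) • (ContinuousLinearMap.fst ℝ ℝ ℝ))
    + ((p.2 - x.2) • (ContinuousLinearMap.snd ℝ ℝ ℝ) + (p.2 - x.2) • (ContinuousLinearMap.snd ℝ ℝ ℝ))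
  Dxx _ := 2
  Dyy _ := 2
  hD p := by
    have h1 : HasFDerivAt (fun y : ℝ × ℝ => y.1 - x.1) (ContinuousLinearMap.fst ℝ ℝ ℝ) p :=
      (hasFDerivAt_fst).sub_const x.1
    have h2 : HasFDerivAt (fun y : ℝ × ℝ => y.2 - x.2) (ContinuousLinearMap.snd ℝ ℝ ℝ) p :=
      (hasFDerivAt_snd).sub_const x.2
    exact (h1.mul h1).add (h2.mul h2)
  hxx p := by
    have heq : (fun t : ℝ => (((p + (t, 0)).1 - x.1) • (ContinuousLinearMap.fst ℝ ℝ ℝ) + ((p + (t, 0)).1 - x.1) • (ContinuousLinearMap.fst ℝ ℝ ℝ)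
        + (((p + (t, 0)).2 - x.2) • (ContinuousLinearMap.snd ℝ ℝ ℝ) + ((p + (t, 0)).2 - x.2) • (ContinuousLinearMap.snd ℝ ℝ ℝ))) ((1:ℝ), (0:ℝ)))
        = fun t : ℝ => (p.1 + t - x.1) + (p.1 + t - x.1) := by
      funext t
      simp [ContinuousLinearMap.add_apply]
    rw [heq]
    have h : HasDerivAt (fun t : ℝ => p.1 + t - x.1) 1 0 :=
      ((hasDerivAt_id (0:ℝ)).const_add p.1).sub_const x.1
    have := h.add h
    norm_num at this
    exact this
  hyy p := by
    have heq : (fun t : ℝ => (((p + (0, t)).1 - x.1) • (ContinuousLinearMap.fst ℝ ℝ ℝ) + ((p + (0, t)).1 - x.1) • (ContinuousLinearMap.fst ℝ ℝ ℝ)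
        + (((p + (0, t)).2 - x.2) • (ContinuousLinearMap.snd ℝ ℝ ℝ) + ((p + (0, t)).2 - x.2) • (ContinuousLinearMap.snd ℝ ℝ ℝ))) ((0:ℝ), (1:ℝ)))
        = fun t : ℝ => (p.2 + t - x.2) + (p.2 + t - x.2) := by
      funext t
      simp [ContinuousLinearMap.add_apply]
    rw [heq]
    have h : HasDerivAt (fun t : ℝ => p.2 + t - x.2) 1 0 :=
      ((hasDerivAt_id (0:ℝ)).const_add p.2).sub_const x.2
    have := h.add h
    norm_num at this
    exact this

/-- QD data is closed under `V + c*W`. -/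
noncomputable def QD.addSmul {V W : ℝ × ℝ → ℝ} (Q1 : QD V) (c : ℝ) (Q2 : QD W) :
    QD (fun p => V p + c * W p) where
  D p := Q1.D p + c • Q2.D p
  Dxx p := Q1.Dxx p + c * Q2.Dxx p
  Dyy p := Q1.Dyy p + c * Q2.Dyy p
  hD p := (Q1.hD p).add ((Q2.hD p).const_mul c)
  hxx p := by
    have h := (Q1.hxx p).add ((Q2.hxx p).const_mul c)
    simpa [ContinuousLinearMap.add_apply, Pi.add_def] using h
  hyy p := by
    have h := (Q1.hyy p).add ((Q2.hyy p).const_mul c)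
    simpa [ContinuousLinearMap.add_apply, Pi.add_def] using h

/-- QD data for the average of a C² function over a bounded measurable set. -/
noncomputable def QD_avg (hw : ContDiff ℝ 2 w) {s : Set (ℝ × ℝ)}
    (hs : MeasurableSet s) (hb : Bornology.IsBounded s) :
    QD (fun y => ∫ z in s, w (y + z)) where
  D y := ∫ z in s, fderiv ℝ w (y + z)
  Dxx p := ∫ z in s, pdx (pdx w) (p + z)
  Dyy p := ∫ z in s, pdy (pdy w) (p + z)
  hD y := avg_hasFDerivAt (hw.of_le (by norm_num)) hs hb y
  hxx p := by
    have heq : (fun t : ℝ => (∫ z in s, fderiv ℝ w (p + (t, 0) + z)) ((1:ℝ), (0:ℝ)))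
        = fun t : ℝ => ∫ z in s, pdx w (p + (t, 0) + z) := by
      funext t
      exact avg_apply_eq (hw.of_le (by norm_num)) hb (p + (t, 0)) _
    rw [heq]
    have havg := avg_hasFDerivAt (contDiff_pdx hw) hs hb (p + ((0:ℝ), (0:ℝ)))
    have h := havg.comp_hasDerivAt 0 (lineX_hasDerivAt p 0)
    have hp : p + ((0:ℝ), (0:ℝ)) = p := by simp
    rw [hp] at h
    have happ := avg_apply_eq (contDiff_pdx hw) hb p ((1:ℝ), (0:ℝ))
    rw [happ] at h
    exact h
  hyy p := by
    have heq : (fun t : ℝ => (∫ z in s, fderiv ℝ w (p + (0, t) + z)) ((0:ℝ), (1:ℝ)))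
        = fun t : ℝ => ∫ z in s, pdy w (p + (0, t) + z) := by
      funext t
      exact avg_apply_eq (hw.of_le (by norm_num)) hb (p + (0, t)) _
    rw [heq]
    have havg := avg_hasFDerivAt (contDiff_pdy hw) hs hb (p + ((0:ℝ), (0:ℝ)))
    have h := havg.comp_hasDerivAt 0 (lineY_hasDerivAt p 0)
    have hp : p + ((0:ℝ), (0:ℝ)) = p := by simp
    rw [hp] at h
    have happ := avg_apply_eq (contDiff_pdy hw) hb p ((0:ℝ), (1:ℝ))
    rw [happ] at h
    exact h

end Part2
section Part3

lemma contR_integrableOn {E : Type*} [NormedAddCommGroup E] {g : ℝ → E}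
    (hg : Continuous g) {s : Set ℝ} (hb : Bornology.IsBounded s) :
    IntegrableOn g s volume :=
  ((hg.continuousOn).integrableOn_compact hb.isCompact_closure).mono_set subset_closure

/-- Polar coordinates for integrals over the disc `EB L`. -/
lemma polar_disc {L : ℝ} (hL : 0 < L) {h : ℝ × ℝ → ℝ} (hc : Continuous h) :
    ∫ z in EB L, h z
      = ∫ r in Ioo (0:ℝ) L, (∫ θ in Ioo (-π) π, r * h (r * Real.cos θ, r * Real.sin θ)) := by
  have key := integral_comp_polarCoord_symm ((EB L).indicator h)
  rw [integral_indicator (EB_meas L)] at key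
  rw [← key]
  set G : ℝ × ℝ → ℝ := fun p => p.1 * h (p.1 * Real.cos p.2, p.1 * Real.sin p.2) with hG
  have hGc : Continuous G := by
    apply continuous_fst.mul
    exact hc.comp ((continuous_fst.mul (Real.continuous_cos.comp continuous_snd)).prodMk
      (continuous_fst.mul (Real.continuous_sin.comp continuous_snd)))
  have hcong : ∀ p ∈ polarCoord.target,
      p.1 • (EB L).indicator h (polarCoord.symm p)
        = (Ioo (0:ℝ) L ×ˢ Ioo (-π) π).indicator G p := by
    rintro ⟨r, θ⟩ hp
    rw [polarCoord_target] at hp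
    obtain ⟨hr, hθ⟩ := hp
    simp only [Set.mem_Ioi] at hr
    have hsymm : polarCoord.symm (r, θ) = (r * Real.cos θ, r * Real.sin θ) := by
      simp [polarCoord]
    rw [hsymm]
    have hsq : (r * Real.cos θ) ^ 2 + (r * Real.sin θ) ^ 2 = r ^ 2 := by
      have := Real.sin_sq_add_cos_sq θ
      nlinarith
    by_cases hmem : (r * Real.cos θ, r * Real.sin θ) ∈ EB L
    · have hrL : r < L := by
        simp only [EB, Set.mem_setOf_eq] at hmem
        rw [hsq] at hmem
        nlinarith
      rw [Set.indicator_of_mem hmem, Set.indicator_of_mem (by exact ⟨⟨hr, hrL⟩, hθ⟩)]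
      simp [G, smul_eq_mul]
    · have hrL : ¬ (r < L) := by
        intro hlt
        apply hmem
        simp only [EB, Set.mem_setOf_eq]
        rw [hsq]
        nlinarith
      rw [Set.indicator_of_notMem hmem, Set.indicator_of_notMem (by
        rintro ⟨⟨_, h2⟩, _⟩; exact hrL h2)]
      simp
  rw [MeasureTheory.setIntegral_congr_fun polarCoord.open_target.measurableSet hcong]
  have hsub : (Ioo (0:ℝ) L ×ˢ Ioo (-π) π) ⊆ polarCoord.target := by
    rw [polarCoord_target]
    exact Set.prod_mono (fun t ht => ht.1) subset_rfl
  rw [MeasureTheory.setIntegral_indicator ((measurableSet_Ioo).prod measurableSet_Ioo),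
    Set.inter_eq_self_of_subset_right hsub]
  have hbd : Bornology.IsBounded (Ioo (0:ℝ) L ×ˢ Ioo (-π) π) :=
    (Metric.isBounded_Ioo _ _).prod (Metric.isBounded_Ioo _ _)
  have hint : IntegrableOn G (Ioo (0:ℝ) L ×ˢ Ioo (-π) π) (volume.prod volume) := by
    rw [← MeasureTheory.Measure.volume_eq_prod]
    exact contE_integrableOn hGc hbd
  have := MeasureTheory.setIntegral_prod G hint
  rw [← MeasureTheory.Measure.volume_eq_prod] at this
  exact this

lemma vol_EB {L : ℝ} (hL : 0 < L) : (volume (EB L)).toReal = π * L ^ 2 := by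
  have h := polar_disc hL (h := fun _ => (1:ℝ)) continuous_const
  have hL1 : ∫ z in EB L, (1:ℝ) = (volume (EB L)).toReal := by
    rw [MeasureTheory.setIntegral_const]
    simp [measureReal_def]
  rw [hL1] at h
  rw [h]
  have hinner : ∀ r : ℝ, (∫ θ in Ioo (-π) π, r * (1:ℝ)) = (2 * π) * r := by
    intro r
    rw [MeasureTheory.setIntegral_const, measureReal_def, Real.volume_Ioo]
    rw [ENNReal.toReal_ofReal (by linarith [Real.pi_pos])]
    rw [smul_eq_mul]
    ring
  calc (∫ r in Ioo (0:ℝ) L, ∫ θ in Ioo (-π) π, r * (1:ℝ))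
      = ∫ r in Ioo (0:ℝ) L, (2 * π) * r := by
        apply MeasureTheory.setIntegral_congr_fun measurableSet_Ioo
        intro r _
        exact hinner r
    _ = ∫ r in (0:ℝ)..L, (2 * π) * r := by
        rw [intervalIntegral.integral_of_le hL.le, MeasureTheory.integral_Ioc_eq_integral_Ioo]
    _ = (2 * π) * ∫ r in (0:ℝ)..L, r := by rw [intervalIntegral.integral_const_mul]
    _ = π * L ^ 2 := by rw [integral_id]; ring

end Part3
section Part4

noncomputable def eV (θ : ℝ) : ℝ × ℝ := (Real.cos θ, Real.sin θ)
noncomputable def eW (θ : ℝ) : ℝ × ℝ := (-Real.sin θ, Real.cos θ)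

lemma eV_cont : Continuous eV := (Real.continuous_cos).prodMk (Real.continuous_sin)
lemma eW_cont : Continuous eW := (Real.continuous_sin.neg).prodMk (Real.continuous_cos)

lemma eV_hasDerivAt (θ : ℝ) : HasDerivAt eV (eW θ) θ :=
  (Real.hasDerivAt_cos θ).prodMk (Real.hasDerivAt_sin θ)

lemma eW_hasDerivAt (θ : ℝ) : HasDerivAt eW (-(eV θ)) θ := by
  have h := ((Real.hasDerivAt_sin θ).neg).prodMk (Real.hasDerivAt_cos θ)
  unfold eW
  simpa [eV, Prod.neg_mk] using h

lemma norm_eV_le (θ : ℝ) : ‖eV θ‖ ≤ 1 := by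
  rw [Prod.norm_def]
  simp only [Real.norm_eq_abs]
  exact max_le (Real.abs_cos_le_one θ) (Real.abs_sin_le_one θ)

variable {w : ℝ × ℝ → ℝ}

lemma lap_eq_D2 (hw : ContDiff ℝ 2 w) (p : ℝ × ℝ) :
    lap w p = fderiv ℝ (fderiv ℝ w) p (1, 0) (1, 0) + fderiv ℝ (fderiv ℝ w) p (0, 1) (0, 1) := by
  have hD1diff : Differentiable ℝ (fderiv ℝ w) :=
    (hw.fderiv_right (by norm_num)).differentiable one_ne_zero
  have h1 : HasFDerivAt (pdx w)
      ((ContinuousLinearMap.apply ℝ ℝ ((1:ℝ), (0:ℝ))).comp (fderiv ℝ (fderiv ℝ w) p)) p :=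
    ((ContinuousLinearMap.apply ℝ ℝ ((1:ℝ), (0:ℝ))).hasFDerivAt).comp p (hD1diff p).hasFDerivAt
  have h2 : HasFDerivAt (pdy w)
      ((ContinuousLinearMap.apply ℝ ℝ ((0:ℝ), (1:ℝ))).comp (fderiv ℝ (fderiv ℝ w) p)) p :=
    ((ContinuousLinearMap.apply ℝ ℝ ((0:ℝ), (1:ℝ))).hasFDerivAt).comp p (hD1diff p).hasFDerivAt
  show pdx (pdx w) p + pdy (pdy w) p = _
  rw [pdx, pdy, h1.fderiv, h2.fderiv]
  simp [ContinuousLinearMap.comp_apply, ContinuousLinearMap.apply_apply]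

lemma rot_trace (hw : ContDiff ℝ 2 w) (p : ℝ × ℝ) (θ : ℝ) :
    fderiv ℝ (fderiv ℝ w) p (eV θ) (eV θ) + fderiv ℝ (fderiv ℝ w) p (eW θ) (eW θ)
      = lap w p := by
  rw [lap_eq_D2 hw]
  have he : eV θ = Real.cos θ • ((1:ℝ), (0:ℝ)) + Real.sin θ • ((0:ℝ), (1:ℝ)) := by
    simp [eV, Prod.ext_iff]
  have he' : eW θ = (-Real.sin θ) • ((1:ℝ), (0:ℝ)) + Real.cos θ • ((0:ℝ), (1:ℝ)) := by
    simp [eW, Prod.ext_iff]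
  have hsc := Real.sin_sq_add_cos_sq θ
  rw [he, he']
  simp only [map_add, _root_.map_smul, ContinuousLinearMap.add_apply,
    ContinuousLinearMap.smul_apply, ContinuousLinearMap.coe_smul', Pi.smul_apply, smul_eq_mul]
  linear_combination (fderiv ℝ (fderiv ℝ w) p (1, 0) (1, 0)
    + fderiv ℝ (fderiv ℝ w) p (0, 1) (0, 1)) * hsc

end Part4
section Part5

variable {w : ℝ × ℝ → ℝ}

noncomputable def circA (w : ℝ × ℝ → ℝ) (x : ℝ × ℝ) (r : ℝ) : ℝ :=
  ∫ θ in Ioo (-π) π, w (x + r • eV θ)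

noncomputable def circA1 (w : ℝ × ℝ → ℝ) (x : ℝ × ℝ) (r : ℝ) : ℝ :=
  ∫ θ in Ioo (-π) π, fderiv ℝ w (x + r • eV θ) (eV θ)

noncomputable def circA2 (w : ℝ × ℝ → ℝ) (x : ℝ × ℝ) (r : ℝ) : ℝ :=
  ∫ θ in Ioo (-π) π, fderiv ℝ (fderiv ℝ w) (x + r • eV θ) (eV θ) (eV θ)

lemma hasDerivAt_ray (x : ℝ × ℝ) (θ : ℝ) (r : ℝ) :
    HasDerivAt (fun s : ℝ => x + s • eV θ) (eV θ) r := by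
  simpa using ((hasDerivAt_id r).smul_const (eV θ)).const_add x

lemma ray_mem_ball {r₀ r : ℝ} (x : ℝ × ℝ) (θ : ℝ) (hr : r ∈ Metric.ball r₀ 1) :
    x + r • eV θ ∈ Metric.closedBall x (|r₀| + 1) := by
  rw [Metric.mem_closedBall, dist_eq_norm]
  have h1 : x + r • eV θ - x = r • eV θ := by abel
  rw [h1, norm_smul]
  have h2 : |r - r₀| < 1 := by
    have := Metric.mem_ball.1 hr
    rwa [Real.dist_eq] at this
  have h3 : |r| ≤ |r₀| + 1 := by
    calc |r| = |r₀ + (r - r₀)| := by ring_nf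
      _ ≤ |r₀| + |r - r₀| := abs_add_le _ _
      _ ≤ |r₀| + 1 := by linarith
  have h4 := norm_eV_le θ
  have h5 : ‖(r:ℝ)‖ = |r| := Real.norm_eq_abs r
  rw [h5]
  nlinarith [abs_nonneg r, abs_nonneg r₀]

lemma volIoo_lt_top : volume (Ioo (-π) π) < ⊤ := measure_Ioo_lt_top

lemma circA_hasDerivAt (hw : ContDiff ℝ 2 w) (x : ℝ × ℝ) (r₀ : ℝ) :
    HasDerivAt (circA w x) (circA1 w x r₀) r₀ := by
  have hwd : Differentiable ℝ w := hw.differentiable (by norm_num)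
  have hD1cont : Continuous (fderiv ℝ w) := hw.continuous_fderiv (by norm_num)
  obtain ⟨C, hC⟩ := (isCompact_closedBall x (|r₀| + 1)).exists_bound_of_continuousOn
    hD1cont.continuousOn
  have hIoobd : Bornology.IsBounded (Ioo (-π) π) := Metric.isBounded_Ioo _ _
  have key := hasDerivAt_integral_of_dominated_loc_of_deriv_le
    (F := fun r θ => w (x + r • eV θ))
    (F' := fun r θ => fderiv ℝ w (x + r • eV θ) (eV θ))
    (μ := volume.restrict (Ioo (-π) π)) (x₀ := r₀) (bound := fun _ => C)
    (s := Metric.ball _ 1) (Metric.ball_mem_nhds _ one_pos)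
    (Filter.Eventually.of_forall fun r => by
      exact ((hwd.continuous.comp (continuous_const.add (eV_cont.const_smul r))).aestronglyMeasurable))
    (by exact (contR_integrableOn
      (hwd.continuous.comp (continuous_const.add (eV_cont.const_smul r₀))) hIoobd))
    (by exact ((hD1cont.comp (continuous_const.add (eV_cont.const_smul r₀))).clm_apply
      eV_cont).aestronglyMeasurable)
    ?_ (MeasureTheory.integrableOn_const volIoo_lt_top.ne) ?_
  · exact key.2
  · refine Filter.Eventually.of_forall fun θ r hr => ?_
    have h1 := (fderiv ℝ w (x + r • eV θ)).le_opNorm (eV θ)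
    have h2 := hC _ (ray_mem_ball x θ hr)
    have h3 := norm_eV_le θ
    have h4 : (0:ℝ) ≤ ‖fderiv ℝ w (x + r • eV θ)‖ := norm_nonneg _
    calc ‖fderiv ℝ w (x + r • eV θ) (eV θ)‖
        ≤ ‖fderiv ℝ w (x + r • eV θ)‖ * ‖eV θ‖ := h1
      _ ≤ C := by nlinarith
  · refine Filter.Eventually.of_forall fun θ r _ => ?_
    exact (hwd _).hasFDerivAt.comp_hasDerivAt r (hasDerivAt_ray x θ r)

lemma circA1_hasDerivAt (hw : ContDiff ℝ 2 w) (x : ℝ × ℝ) (r₀ : ℝ) :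
    HasDerivAt (circA1 w x) (circA2 w x r₀) r₀ := by
  have hD1diff : Differentiable ℝ (fderiv ℝ w) :=
    (hw.fderiv_right (by norm_num)).differentiable one_ne_zero
  have hD1cont : Continuous (fderiv ℝ w) := hw.continuous_fderiv (by norm_num)
  have hD2cont : Continuous (fderiv ℝ (fderiv ℝ w)) :=
    (hw.fderiv_right (by norm_num)).continuous_fderiv one_ne_zero
  obtain ⟨C, hC⟩ := (isCompact_closedBall x (|r₀| + 1)).exists_bound_of_continuousOn
    (f := fderiv ℝ (fderiv ℝ w)) hD2cont.continuousOn
  have hIoobd : Bornology.IsBounded (Ioo (-π) π) := Metric.isBounded_Ioo _ _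
  have key := hasDerivAt_integral_of_dominated_loc_of_deriv_le
    (F := fun r θ => fderiv ℝ w (x + r • eV θ) (eV θ))
    (F' := fun r θ => fderiv ℝ (fderiv ℝ w) (x + r • eV θ) (eV θ) (eV θ))
    (μ := volume.restrict (Ioo (-π) π)) (x₀ := r₀) (bound := fun _ => C)
    (s := Metric.ball _ 1) (Metric.ball_mem_nhds _ one_pos)
    (Filter.Eventually.of_forall fun r => by
      exact (((hD1cont.comp (continuous_const.add (eV_cont.const_smul r))).clm_apply
        eV_cont).aestronglyMeasurable))
    (by exact (contR_integrableOn
      ((hD1cont.comp (continuous_const.add (eV_cont.const_smul r₀))).clm_apply eV_cont) hIoobd))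
    (by exact (((hD2cont.comp (continuous_const.add (eV_cont.const_smul r₀))).clm_apply
      eV_cont).clm_apply eV_cont).aestronglyMeasurable)
    ?_ (MeasureTheory.integrableOn_const volIoo_lt_top.ne) ?_
  · exact key.2
  · refine Filter.Eventually.of_forall fun θ r hr => ?_
    set u := x + r • eV θ
    have h1 := (fderiv ℝ (fderiv ℝ w) u (eV θ)).le_opNorm (eV θ)
    have h1' := (fderiv ℝ (fderiv ℝ w) u).le_opNorm (eV θ)
    have h2 := hC u (ray_mem_ball x θ hr)
    have h3 := norm_eV_le θ
    have h4 : (0:ℝ) ≤ ‖fderiv ℝ (fderiv ℝ w) u‖ := ContinuousLinearMap.opNorm_nonneg _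
    have h5 : (0:ℝ) ≤ ‖fderiv ℝ (fderiv ℝ w) u (eV θ)‖ := norm_nonneg _
    have h6 : (0:ℝ) ≤ ‖eV θ‖ := norm_nonneg _
    calc ‖fderiv ℝ (fderiv ℝ w) u (eV θ) (eV θ)‖
        ≤ ‖fderiv ℝ (fderiv ℝ w) u (eV θ)‖ * ‖eV θ‖ := h1
      _ ≤ C := by nlinarith
  · refine Filter.Eventually.of_forall fun θ r _ => ?_
    have hΦ : HasDerivAt (fun s : ℝ => fderiv ℝ w (x + s • eV θ))
        (fderiv ℝ (fderiv ℝ w) (x + r • eV θ) (eV θ)) r :=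
      (hD1diff _).hasFDerivAt.comp_hasDerivAt r (hasDerivAt_ray x θ r)
    have h := hΦ.clm_apply (hasDerivAt_const r (eV θ))
    simpa using h

lemma circA_cont (hw : ContDiff ℝ 2 w) (x : ℝ × ℝ) : Continuous (circA w x) := by
  rw [continuous_iff_continuousAt]
  exact fun r => (circA_hasDerivAt hw x r).continuousAt

/-- FTC in the angular variable: the `θθ`-term integrates to zero. -/
lemma theta_ftc (hw : ContDiff ℝ 2 w) (x : ℝ × ℝ) (r : ℝ) :
    ∫ θ in Ioo (-π) π,
      (fderiv ℝ (fderiv ℝ w) (x + r • eV θ) (r • eW θ) (r • eW θ)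
        + fderiv ℝ w (x + r • eV θ) (r • (-(eV θ)))) = 0 := by
  have hD1diff : Differentiable ℝ (fderiv ℝ w) :=
    (hw.fderiv_right (by norm_num)).differentiable one_ne_zero
  have hD1cont : Continuous (fderiv ℝ w) := hw.continuous_fderiv (by norm_num)
  have hD2cont : Continuous (fderiv ℝ (fderiv ℝ w)) :=
    (hw.fderiv_right (by norm_num)).continuous_fderiv one_ne_zero
  have hγθ : ∀ θ : ℝ, HasDerivAt (fun θ : ℝ => x + r • eV θ) (r • eW θ) θ :=
    fun θ => ((eV_hasDerivAt θ).const_smul r).const_add x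
  have hk : ∀ θ : ℝ, HasDerivAt (fun θ : ℝ => fderiv ℝ w (x + r • eV θ) (r • eW θ))
      (fderiv ℝ (fderiv ℝ w) (x + r • eV θ) (r • eW θ) (r • eW θ)
        + fderiv ℝ w (x + r • eV θ) (r • (-(eV θ)))) θ := by
    intro θ
    have hΦ : HasDerivAt (fun θ : ℝ => fderiv ℝ w (x + r • eV θ))
        (fderiv ℝ (fderiv ℝ w) (x + r • eV θ) (r • eW θ)) θ :=
      (hD1diff _).hasFDerivAt.comp_hasDerivAt θ (hγθ θ)
    exact hΦ.clm_apply ((eW_hasDerivAt θ).const_smul r)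
  have hcont : Continuous (fun θ : ℝ =>
      fderiv ℝ (fderiv ℝ w) (x + r • eV θ) (r • eW θ) (r • eW θ)
        + fderiv ℝ w (x + r • eV θ) (r • (-(eV θ)))) := by
    have hγc : Continuous (fun θ : ℝ => x + r • eV θ) := continuous_const.add (eV_cont.const_smul r)
    have c1 : Continuous (fun θ : ℝ => r • eW θ) := eW_cont.const_smul r
    have c2 : Continuous (fun θ : ℝ => r • (-(eV θ))) := (eV_cont.neg).const_smul r
    exact (((hD2cont.comp hγc).clm_apply c1).clm_apply c1).add
      ((hD1cont.comp hγc).clm_apply c2)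
  have hle : -π ≤ π := by linarith [Real.pi_pos]
  rw [← MeasureTheory.integral_Ioc_eq_integral_Ioo, ← intervalIntegral.integral_of_le hle]
  rw [intervalIntegral.integral_eq_sub_of_hasDerivAt (fun θ _ => hk θ)
    (hcont.intervalIntegrable _ _)]
  have hV : eV π = eV (-π) := by simp [eV]
  have hW : eW π = eW (-π) := by simp [eW]
  rw [hV, hW, sub_self]

end Part5
section Part6

variable {w : ℝ × ℝ → ℝ}

lemma darboux_ineq (hw : ContDiff ℝ 2 w) (hsub : ∀ p, 0 ≤ lap w p) (x : ℝ × ℝ) (r : ℝ) :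
    0 ≤ r ^ 2 * circA2 w x r + r * circA1 w x r := by
  have hD1cont : Continuous (fderiv ℝ w) := hw.continuous_fderiv (by norm_num)
  have hD2cont : Continuous (fderiv ℝ (fderiv ℝ w)) :=
    (hw.fderiv_right (by norm_num)).continuous_fderiv one_ne_zero
  have hγc : Continuous (fun θ : ℝ => x + r • eV θ) := continuous_const.add (eV_cont.const_smul r)
  have hIoobd : Bornology.IsBounded (Ioo (-π) π) := Metric.isBounded_Ioo _ _
  have c1 : Continuous (fun θ : ℝ => r • eW θ) := eW_cont.const_smul r
  have c2 : Continuous (fun θ : ℝ => r • (-(eV θ))) := (eV_cont.neg).const_smul r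
  -- integrands
  have iA2 : IntegrableOn (fun θ : ℝ =>
      fderiv ℝ (fderiv ℝ w) (x + r • eV θ) (eV θ) (eV θ)) (Ioo (-π) π) volume :=
    contR_integrableOn (((hD2cont.comp hγc).clm_apply eV_cont).clm_apply eV_cont) hIoobd
  have iA1 : IntegrableOn (fun θ : ℝ =>
      fderiv ℝ w (x + r • eV θ) (eV θ)) (Ioo (-π) π) volume :=
    contR_integrableOn ((hD1cont.comp hγc).clm_apply eV_cont) hIoobd
  have iK : IntegrableOn (fun θ : ℝ =>
      fderiv ℝ (fderiv ℝ w) (x + r • eV θ) (r • eW θ) (r • eW θ)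
        + fderiv ℝ w (x + r • eV θ) (r • (-(eV θ)))) (Ioo (-π) π) volume :=
    contR_integrableOn ((((hD2cont.comp hγc).clm_apply c1).clm_apply c1).add
      ((hD1cont.comp hγc).clm_apply c2)) hIoobd
  have iLap : IntegrableOn (fun θ : ℝ => lap w (x + r • eV θ)) (Ioo (-π) π) volume :=
    contR_integrableOn ((cont_lap hw).comp hγc) hIoobd
  have hpoint : ∀ θ : ℝ,
      r ^ 2 * fderiv ℝ (fderiv ℝ w) (x + r • eV θ) (eV θ) (eV θ)
        + r * fderiv ℝ w (x + r • eV θ) (eV θ)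
      = r ^ 2 * lap w (x + r • eV θ)
        - (fderiv ℝ (fderiv ℝ w) (x + r • eV θ) (r • eW θ) (r • eW θ)
          + fderiv ℝ w (x + r • eV θ) (r • (-(eV θ)))) := by
    intro θ
    have hrot := rot_trace hw (x + r • eV θ) θ
    simp only [_root_.map_smul, ContinuousLinearMap.smul_apply, map_neg,
      ContinuousLinearMap.neg_apply, smul_eq_mul, smul_neg]
    linear_combination (r^2) * hrot
  have hsum : r ^ 2 * circA2 w x r + r * circA1 w x r
      = ∫ θ in Ioo (-π) π,
          (r ^ 2 * fderiv ℝ (fderiv ℝ w) (x + r • eV θ) (eV θ) (eV θ)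
            + r * fderiv ℝ w (x + r • eV θ) (eV θ)) := by
    rw [circA2, circA1, ← MeasureTheory.integral_const_mul, ← MeasureTheory.integral_const_mul]
    rw [← MeasureTheory.integral_add (iA2.const_mul _) (iA1.const_mul _)]
  rw [hsum]
  have hcongr : ∫ θ in Ioo (-π) π,
        (r ^ 2 * fderiv ℝ (fderiv ℝ w) (x + r • eV θ) (eV θ) (eV θ)
          + r * fderiv ℝ w (x + r • eV θ) (eV θ))
      = ∫ θ in Ioo (-π) π,
        (r ^ 2 * lap w (x + r • eV θ)
          - (fderiv ℝ (fderiv ℝ w) (x + r • eV θ) (r • eW θ) (r • eW θ)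
            + fderiv ℝ w (x + r • eV θ) (r • (-(eV θ))))) :=
    MeasureTheory.setIntegral_congr_fun measurableSet_Ioo (fun θ _ => hpoint θ)
  rw [hcongr, MeasureTheory.integral_sub (iLap.const_mul _) iK, theta_ftc hw x r, sub_zero,
    MeasureTheory.integral_const_mul]
  exact mul_nonneg (sq_nonneg r) (MeasureTheory.setIntegral_nonneg measurableSet_Ioo
    (fun θ _ => hsub _))

lemma circA_zero (x : ℝ × ℝ) : circA w x 0 = 2 * π * w x := by
  rw [circA]
  have h : ∀ θ ∈ Ioo (-π) π, w (x + (0:ℝ) • eV θ) = w x := by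
    intro θ _
    simp
  rw [MeasureTheory.setIntegral_congr_fun measurableSet_Ioo h, MeasureTheory.setIntegral_const,
    measureReal_def, Real.volume_Ioo, ENNReal.toReal_ofReal (by linarith [Real.pi_pos])]
  rw [smul_eq_mul]
  ring

/-- Sub-mean value property on discs for functions with nonnegative Laplacian. -/
lemma mvp (hw : ContDiff ℝ 2 w) (hsub : ∀ p, 0 ≤ lap w p) (x : ℝ × ℝ) {L : ℝ} (hL : 0 < L) :
    π * L ^ 2 * w x ≤ ∫ z in EB L, w (x + z) := by
  have hwc : Continuous (fun z : ℝ × ℝ => w (x + z)) :=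
    (hw.continuous).comp (continuous_const.add continuous_id)
  rw [polar_disc hL hwc]
  -- B(r) = r * circA1 is monotone, hence circA1 ≥ 0 on (0, L), hence circA monotone
  have hBder : ∀ r : ℝ, HasDerivAt (fun s : ℝ => s * circA1 w x s)
      (circA1 w x r + r * circA2 w x r) r := by
    intro r
    have h := (hasDerivAt_id r).mul (circA1_hasDerivAt hw x r)
    simpa [Pi.mul_def] using h
  have hBmono : MonotoneOn (fun s : ℝ => s * circA1 w x s) (Icc 0 L) := by
    apply monotoneOn_of_deriv_nonneg (convex_Icc 0 L)
    · exact fun r _ => (hBder r).continuousAt.continuousWithinAt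
    · exact fun r _ => ((hBder r).differentiableAt).differentiableWithinAt
    · intro r hr
      rw [interior_Icc] at hr
      rw [(hBder r).deriv]
      nlinarith [darboux_ineq hw hsub x r, hr.1]
  have hA1nonneg : ∀ r ∈ Ioo (0:ℝ) L, 0 ≤ circA1 w x r := by
    intro r hr
    have h0 : (0:ℝ) ∈ Icc (0:ℝ) L := ⟨le_rfl, hL.le⟩
    have hrI : r ∈ Icc (0:ℝ) L := ⟨hr.1.le, hr.2.le⟩
    have := hBmono h0 hrI hr.1.le
    simp only [zero_mul] at this
    nlinarith [hr.1]
  have hAmono : MonotoneOn (circA w x) (Icc 0 L) := by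
    apply monotoneOn_of_deriv_nonneg (convex_Icc 0 L)
    · exact (circA_cont hw x).continuousOn
    · exact fun r _ => ((circA_hasDerivAt hw x r).differentiableAt).differentiableWithinAt
    · intro r hr
      rw [interior_Icc] at hr
      rw [(circA_hasDerivAt hw x r).deriv]
      exact hA1nonneg r hr
  -- rewrite inner integral as r * circA
  have hinner : ∀ r ∈ Ioo (0:ℝ) L,
      (∫ θ in Ioo (-π) π, r * w (x + (r * Real.cos θ, r * Real.sin θ)))
        = r * circA w x r := by
    intro r _
    have h1 : ∀ θ ∈ Ioo (-π) π,
        r * w (x + (r * Real.cos θ, r * Real.sin θ)) = r * w (x + r • eV θ) := by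
      intro θ _
      have he : r • eV θ = (r * Real.cos θ, r * Real.sin θ) := by
        simp [eV, Prod.ext_iff]
      rw [he]
    rw [MeasureTheory.setIntegral_congr_fun measurableSet_Ioo h1, circA,
      MeasureTheory.integral_const_mul]
  rw [MeasureTheory.setIntegral_congr_fun measurableSet_Ioo hinner]
  have hIoobd : Bornology.IsBounded (Ioo (0:ℝ) L) := Metric.isBounded_Ioo _ _
  have hfint : IntegrableOn (fun r : ℝ => r * circA w x r) (Ioo (0:ℝ) L) volume :=
    contR_integrableOn (continuous_id.mul (circA_cont hw x)) hIoobd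
  have hgint : IntegrableOn (fun r : ℝ => r * (2 * π * w x)) (Ioo (0:ℝ) L) volume :=
    contR_integrableOn (continuous_id.mul continuous_const) hIoobd
  have hmono : ∫ r in Ioo (0:ℝ) L, r * (2 * π * w x) ≤ ∫ r in Ioo (0:ℝ) L, r * circA w x r := by
    apply MeasureTheory.setIntegral_mono_on hgint hfint measurableSet_Ioo
    intro r hr
    have h0 : (0:ℝ) ∈ Icc (0:ℝ) L := ⟨le_rfl, hL.le⟩
    have hrI : r ∈ Icc (0:ℝ) L := ⟨hr.1.le, hr.2.le⟩
    have hmlower := hAmono h0 hrI hr.1.le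
    rw [circA_zero] at hmlower
    exact mul_le_mul_of_nonneg_left hmlower hr.1.le
  have hconst : ∫ r in Ioo (0:ℝ) L, r * (2 * π * w x) = π * L ^ 2 * w x := by
    have h1 : ∀ r ∈ Ioo (0:ℝ) L, r * (2 * π * w x) = (2 * π * w x) * r := fun r _ => by ring
    rw [MeasureTheory.setIntegral_congr_fun measurableSet_Ioo h1,
      ← MeasureTheory.integral_Ioc_eq_integral_Ioo, ← intervalIntegral.integral_of_le hL.le,
      intervalIntegral.integral_const_mul, integral_id]
    ring
  rw [← hconst]
  exact hmono

end Part6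
section Part7

lemma sqQ_meas (r : ℝ) (x : ℝ × ℝ) : MeasurableSet (sqQ r x) :=
  measurableSet_Icc.prod measurableSet_Icc

lemma mem_sqQ_self {r : ℝ} (hr : 0 ≤ r) (x : ℝ × ℝ) : x ∈ sqQ r x := by
  constructor <;> constructor <;> simp <;> linarith

lemma sqQ_closed (r : ℝ) (x : ℝ × ℝ) : IsClosed (sqQ r x) := isClosed_Icc.prod isClosed_Icc

lemma sqQ_compact (r : ℝ) (x : ℝ × ℝ) : IsCompact (sqQ r x) := isCompact_Icc.prod isCompact_Icc

/-- A C² function with nonnegative Laplacian is bounded on a square by the sup of its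
boundary values. -/
lemma bound_on_square {w : ℝ × ℝ → ℝ} (hw : ContDiff ℝ 2 w) (hlapnn : ∀ p, 0 ≤ lap w p)
    {R : ℝ} (hR : 0 < R) (x : ℝ × ℝ) (q : ℝ × ℝ) (hq : q ∈ sqQ R x) :
    w q ≤ sSup (w '' frontier (sqQ R x)) := by
  set M := sSup (w '' frontier (sqQ R x)) with hM
  have hfrsub : frontier (sqQ R x) ⊆ sqQ R x := (sqQ_closed R x).frontier_subset
  have hfrcomp : IsCompact (frontier (sqQ R x)) :=
    (sqQ_compact R x).of_isClosed_subset isClosed_frontier hfrsub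
  have hba : BddAbove (w '' frontier (sqQ R x)) := (hfrcomp.image hw.continuous).bddAbove
  have hwleM : ∀ y ∈ frontier (sqQ R x), w y ≤ M :=
    fun y hy => le_csSup hba (Set.mem_image_of_mem w hy)
  have key : ∀ ε : ℝ, 0 < ε → w q ≤ M + ε * (R ^ 2 / 2) := by
    intro ε hε
    have hlapε : ∀ p, 0 < ((QD_ofC2 hw).addSmul ε (QD_quad x)).Dxx p
        + ((QD_ofC2 hw).addSmul ε (QD_quad x)).Dyy p := by
      intro p
      show 0 < (pdx (pdx w) p + ε * 2) + (pdy (pdy w) p + ε * 2)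
      have h : 0 ≤ pdx (pdx w) p + pdy (pdy w) p := hlapnn p
      linarith
    obtain ⟨y, hyfr, hymax⟩ := max_principle ((QD_ofC2 hw).addSmul ε (QD_quad x)) hR x hlapε
    have h1 := hymax q hq
    have hyS := hfrsub hyfr
    simp only [sqQ, Set.mem_prod, Set.mem_Icc] at hyS
    obtain ⟨⟨a1, a2⟩, b1, b2⟩ := hyS
    have hqd : (y.1 - x.1) * (y.1 - x.1) + (y.2 - x.2) * (y.2 - x.2) ≤ R ^ 2 / 2 := by nlinarith
    have hq0 : 0 ≤ (q.1 - x.1) * (q.1 - x.1) + (q.2 - x.2) * (q.2 - x.2) := by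
      nlinarith [mul_self_nonneg (q.1 - x.1), mul_self_nonneg (q.2 - x.2)]
    have hy2 := hwleM y hyfr
    nlinarith
  -- conclude
  by_contra hcon
  push_neg at hcon
  have hRpos : 0 < R ^ 2 / 2 := by positivity
  have hd : 0 < (w q - M) / (R ^ 2 / 2) / 2 := by
    have h1 : 0 < w q - M := by linarith
    positivity
  have := key ((w q - M) / (R ^ 2 / 2) / 2) hd
  have harith : (w q - M) / (R ^ 2 / 2) / 2 * (R ^ 2 / 2) = (w q - M) / 2 := by
    field_simp
  rw [harith] at this
  linarith

lemma qd_frontier {ρ : ℝ} (x y : ℝ × ℝ) (hy : y ∈ frontier (sqQ ρ x)) :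
    (ρ / 2) ^ 2 ≤ (y.1 - x.1) * (y.1 - x.1) + (y.2 - x.2) * (y.2 - x.2) := by
  rw [(sqQ_closed ρ x).frontier_eq] at hy
  obtain ⟨hyS, hyni⟩ := hy
  have hint : interior (sqQ ρ x)
      = Ioo (x.1 - ρ/2) (x.1 + ρ/2) ×ˢ Ioo (x.2 - ρ/2) (x.2 + ρ/2) := by
    rw [sqQ, interior_prod_eq, interior_Icc, interior_Icc]
  rw [hint] at hyni
  simp only [sqQ, Set.mem_prod, Set.mem_Icc] at hyS
  obtain ⟨⟨a1, a2⟩, b1, b2⟩ := hyS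
  by_contra hq
  push_neg at hq
  apply hyni
  have h1 : x.1 - ρ/2 < y.1 := by
    rcases lt_or_eq_of_le a1 with h | h
    · exact h
    · exfalso; nlinarith [mul_self_nonneg (y.2 - x.2)]
  have h2 : y.1 < x.1 + ρ/2 := by
    rcases lt_or_eq_of_le a2 with h | h
    · exact h
    · exfalso; nlinarith [mul_self_nonneg (y.2 - x.2)]
  have h3 : x.2 - ρ/2 < y.2 := by
    rcases lt_or_eq_of_le b1 with h | h
    · exact h
    · exfalso; nlinarith [mul_self_nonneg (y.1 - x.1)]
  have h4 : y.2 < x.2 + ρ/2 := by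
    rcases lt_or_eq_of_le b2 with h | h
    · exact h
    · exfalso; nlinarith [mul_self_nonneg (y.1 - x.1)]
  exact ⟨⟨h1, h2⟩, h3, h4⟩

lemma translate_sq_int (f : ℝ × ℝ → ℝ) (L : ℝ) (p : ℝ × ℝ) :
    ∫ z in sqQ L ((0:ℝ), (0:ℝ)), f (p + z) = ∫ u in sqQ L p, f u := by
  have hmeas0 := sqQ_meas L ((0:ℝ), (0:ℝ))
  have hmeasp := sqQ_meas L p
  have hind : ∀ z : ℝ × ℝ, (sqQ L ((0:ℝ), (0:ℝ))).indicator (fun z => f (p + z)) z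
      = (sqQ L p).indicator f (p + z) := by
    intro z
    have hmem : z ∈ sqQ L ((0:ℝ), (0:ℝ)) ↔ p + z ∈ sqQ L p := by
      simp only [sqQ, Set.mem_prod, Set.mem_Icc, Prod.fst_add, Prod.snd_add]
      constructor
      · rintro ⟨⟨h1, h2⟩, h3, h4⟩
        exact ⟨⟨by linarith, by linarith⟩, by linarith, by linarith⟩
      · rintro ⟨⟨h1, h2⟩, h3, h4⟩
        exact ⟨⟨by linarith, by linarith⟩, by linarith, by linarith⟩
    by_cases hz : z ∈ sqQ L ((0:ℝ), (0:ℝ))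
    · rw [Set.indicator_of_mem hz, Set.indicator_of_mem (hmem.1 hz)]
    · rw [Set.indicator_of_notMem hz, Set.indicator_of_notMem (fun hc => hz (hmem.2 hc))]
  rw [← MeasureTheory.integral_indicator hmeas0, ← MeasureTheory.integral_indicator hmeasp]
  calc ∫ z, (sqQ L ((0:ℝ), (0:ℝ))).indicator (fun z => f (p + z)) z
      = ∫ z, (sqQ L p).indicator f (p + z) := by simp_rw [hind]
    _ = ∫ u, (sqQ L p).indicator f u :=
        MeasureTheory.integral_add_left_eq_self ((sqQ L p).indicator f) p

end Part7
set_option maxHeartbeats 1000000 in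
theorem stmt12 :
    ∃ C : ℝ, 0 < C ∧ ∀ (N : ℕ), Odd N → 3 ≤ N → ∀ σ : ℝ,
      2 / (N : ℝ) ^ 2 < σ → σ < 1 → ∀ (k : ℕ) (w f : ℝ × ℝ → ℝ),
      ContDiff ℝ 2 w → (∀ p, 0 ≤ w p) → (∀ p, f p ≤ lap w p) →
      Measurable f → (∀ p, 0 ≤ f p ∧ f p ≤ 1) →
      (∀ x : ℝ × ℝ, ∀ i : ℕ, i ≤ k →
        σ ^ i / 2 ≤ (1 / (N : ℝ) ^ (2 * i)) * ∫ y in sqQ ((N : ℝ) ^ i) x, f y) →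
      ∀ x : ℝ × ℝ,
        w x ≤ sSup (w '' frontier (sqQ ((N : ℝ) ^ (k + 1)) x)) - C * σ ^ k * (N : ℝ) ^ (2 * k + 2) := by
  refine ⟨1 / 2304, by norm_num, ?_⟩
  intro N _hodd hN3 σ hσlo hσhi k w f hw hw0 hlapf hfmeas hf01 havg x
  set L : ℝ := (N : ℝ) ^ k with hLdef
  set R : ℝ := (N : ℝ) ^ (k + 1) with hRdef
  set ρ : ℝ := R - 2 * L with hρdef
  have hNc : (3 : ℝ) ≤ (N : ℝ) := by exact_mod_cast hN3
  have hN0 : (0 : ℝ) < (N : ℝ) := by linarith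
  have hL1 : (1 : ℝ) ≤ L := one_le_pow₀ (by linarith)
  have hL0 : (0 : ℝ) < L := by linarith
  have hσ0 : 0 < σ := lt_trans (by positivity) hσlo
  have hσk : 0 < σ ^ k := pow_pos hσ0 k
  have hRL : R = L * (N : ℝ) := by rw [hRdef, hLdef, pow_succ]
  have hρpos : 0 < ρ := by rw [hρdef, hRL]; nlinarith
  have hR0 : 0 < R := by rw [hRL]; positivity
  have hlapw : ∀ p, 0 ≤ lap w p := fun p => le_trans (hf01 p).1 (hlapf p)
  set M := sSup (w '' frontier (sqQ R x)) with hMdef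
  have hwle : ∀ q ∈ sqQ R x, w q ≤ M := fun q hq => bound_on_square hw hlapw hR0 x q hq
  -- the averaged function U
  set c : ℝ := σ ^ k * L ^ 2 / 16 with hcdef
  have hc0 : 0 < c := by positivity
  -- lower bound on the Laplacian data of U
  have hlapU : ∀ p : ℝ × ℝ, σ ^ k / 2 * L ^ 2
      ≤ (∫ z in EB L, pdx (pdx w) (p + z)) + (∫ z in EB L, pdy (pdy w) (p + z)) := by
    intro p
    have hbd := EB_bounded L
    have iXX : IntegrableOn (fun z : ℝ × ℝ => pdx (pdx w) (p + z)) (EB L) volume :=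
      contE_integrableOn ((cont_pdxx hw).comp (continuous_const.add continuous_id)) hbd
    have iYY : IntegrableOn (fun z : ℝ × ℝ => pdy (pdy w) (p + z)) (EB L) volume :=
      contE_integrableOn ((cont_pdyy hw).comp (continuous_const.add continuous_id)) hbd
    have hfm : Measurable (fun z : ℝ × ℝ => f (p + z)) :=
      hfmeas.comp (measurable_id.const_add p)
    have iF : IntegrableOn (fun z : ℝ × ℝ => f (p + z)) (EB L) volume := by
      refine bdd_integrableOn hfm (C := 1) ?_ (EB_vol_lt_top L)
      intro q
      rw [abs_le]
      exact ⟨by linarith [(hf01 (p + q)).1], (hf01 (p + q)).2⟩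
    have step1 : σ ^ k / 2 * L ^ 2 ≤ ∫ z in sqQ L ((0:ℝ), (0:ℝ)), f (p + z) := by
      rw [translate_sq_int f L p]
      have h := havg p k le_rfl
      have hpow : (N : ℝ) ^ (2 * k) = L ^ 2 := by
        rw [hLdef, ← pow_mul, mul_comm k 2]
      rw [hpow] at h
      have hL2 : (0:ℝ) < L ^ 2 := by positivity
      rw [div_mul_eq_mul_div, le_div_iff₀ hL2, one_mul] at h
      rw [← hLdef] at h
      exact h
    have hsub : sqQ L ((0:ℝ), (0:ℝ)) ⊆ EB L := by
      rintro ⟨a, b⟩ hz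
      simp only [sqQ, Set.mem_prod, Set.mem_Icc] at hz
      obtain ⟨⟨h1, h2⟩, h3, h4⟩ := hz
      simp only [EB, Set.mem_setOf_eq]
      nlinarith
    have step2 : (∫ z in sqQ L ((0:ℝ), (0:ℝ)), f (p + z)) ≤ ∫ z in EB L, f (p + z) := by
      apply MeasureTheory.setIntegral_mono_set iF
      · filter_upwards with q
        simp only [Pi.zero_apply]
        exact (hf01 (p + q)).1
      · exact HasSubset.Subset.eventuallyLE hsub
    have step3 : (∫ z in EB L, f (p + z))
        ≤ ∫ z in EB L, (pdx (pdx w) (p + z) + pdy (pdy w) (p + z)) := by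
      apply MeasureTheory.integral_mono iF (iXX.add iYY)
      intro z
      exact hlapf (p + z)
    rw [← MeasureTheory.integral_add iXX iYY]
    linarith
  -- the barrier function and the maximum principle on sqQ ρ x
  have hlapV : ∀ p, 0 < ((QD_avg hw (EB_meas L) (EB_bounded L)).addSmul (-c) (QD_quad x)).Dxx p
      + ((QD_avg hw (EB_meas L) (EB_bounded L)).addSmul (-c) (QD_quad x)).Dyy p := by
    intro p
    show 0 < ((∫ z in EB L, pdx (pdx w) (p + z)) + (-c) * 2)
      + ((∫ z in EB L, pdy (pdy w) (p + z)) + (-c) * 2)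
    have h := hlapU p
    have : 4 * c < σ ^ k / 2 * L ^ 2 := by
      rw [hcdef]
      nlinarith
    linarith
  obtain ⟨y, hyfr, hymax⟩ :=
    max_principle ((QD_avg hw (EB_meas L) (EB_bounded L)).addSmul (-c) (QD_quad x)) hρpos x hlapV
  have hxmem : x ∈ sqQ ρ x := mem_sqQ_self hρpos.le x
  have hqdy := qd_frontier x y hyfr
  -- mean value property at x
  have hmvp : π * L ^ 2 * w x ≤ ∫ z in EB L, w (x + z) := mvp hw hlapw x hL0
  -- bound U y by the boundary sup
  have hUy : (∫ z in EB L, w (y + z)) ≤ π * L ^ 2 * M := by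
    have hyS : y ∈ sqQ ρ x := (sqQ_closed ρ x).frontier_subset hyfr
    simp only [sqQ, Set.mem_prod, Set.mem_Icc] at hyS
    obtain ⟨⟨a1, a2⟩, b1, b2⟩ := hyS
    have hbd := EB_bounded L
    have hWint : IntegrableOn (fun z : ℝ × ℝ => w (y + z)) (EB L) volume :=
      contE_integrableOn (hw.continuous.comp (continuous_const.add continuous_id)) hbd
    have hMint : IntegrableOn (fun _ : ℝ × ℝ => M) (EB L) volume :=
      MeasureTheory.integrableOn_const (EB_vol_lt_top L).ne
    have hle : ∀ z ∈ EB L, w (y + z) ≤ M := by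
      rintro ⟨za, zb⟩ hz
      simp only [EB, Set.mem_setOf_eq] at hz
      have hza : |za| < L := by nlinarith [abs_nonneg za, sq_abs za, sq_nonneg zb]
      have hzb : |zb| < L := by nlinarith [abs_nonneg zb, sq_abs zb, sq_nonneg za]
      obtain ⟨hza1, hza2⟩ := abs_lt.1 hza
      obtain ⟨hzb1, hzb2⟩ := abs_lt.1 hzb
      rw [hρdef] at a1 a2 b1 b2
      apply hwle
      simp only [sqQ, Set.mem_prod, Set.mem_Icc, Prod.fst_add, Prod.snd_add]
      exact ⟨⟨by linarith, by linarith⟩, by linarith, by linarith⟩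
    calc (∫ z in EB L, w (y + z)) ≤ ∫ _z in EB L, M :=
          MeasureTheory.setIntegral_mono_on hWint hMint (EB_meas L) hle
      _ = π * L ^ 2 * M := by
          rw [MeasureTheory.setIntegral_const, measureReal_def, vol_EB hL0, smul_eq_mul]
  -- assemble
  have hUxUy : (∫ z in EB L, w (x + z)) + (-c) *
      ((x.1 - x.1) * (x.1 - x.1) + (x.2 - x.2) * (x.2 - x.2))
      ≤ (∫ z in EB L, w (y + z)) + (-c) *
      ((y.1 - x.1) * (y.1 - x.1) + (y.2 - x.2) * (y.2 - x.2)) := hymax x hxmem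
  have h1 : (∫ z in EB L, w (x + z))
      ≤ (∫ z in EB L, w (y + z))
        - c * ((y.1 - x.1) * (y.1 - x.1) + (y.2 - x.2) * (y.2 - x.2)) := by
    nlinarith [hUxUy]
  have h2 : c * ((ρ / 2) ^ 2)
      ≤ c * ((y.1 - x.1) * (y.1 - x.1) + (y.2 - x.2) * (y.2 - x.2)) :=
    mul_le_mul_of_nonneg_left hqdy hc0.le
  have hchain : π * L ^ 2 * w x ≤ π * L ^ 2 * M - c * (ρ / 2) ^ 2 := by
    linarith [hmvp, hUy, h1, h2]
  -- final arithmetic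
  have hπ4 : π ≤ 4 := Real.pi_le_four
  have hπ0 : 0 < π := Real.pi_pos
  have hpow2 : (N : ℝ) ^ (2 * k + 2) = L ^ 2 * (N : ℝ) ^ 2 := by
    rw [hLdef, ← pow_mul, mul_comm k 2, pow_add]
  have hρval : ρ = ((N : ℝ) - 2) * L := by rw [hρdef, hRL]; ring
  have hgain : 1 / 2304 * σ ^ k * (N : ℝ) ^ (2 * k + 2) * (π * L ^ 2) ≤ c * (ρ / 2) ^ 2 := by
    rw [hpow2, hρval, hcdef]
    have hN2 : ((N : ℝ) - 2) ^ 2 * 9 ≥ (N : ℝ) ^ 2 := by nlinarith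
    have hL2 : (0:ℝ) < L ^ 2 := by positivity
    have hN2' : (0:ℝ) < (N:ℝ)^2 := by positivity
    have key : σ ^ k * ((N:ℝ))^2 * L^2 * L ^ 2 * π / 2304 ≤ σ ^ k * L^2 * (((N:ℝ)-2) * L)^2 / 64 := by
      rw [div_le_div_iff₀ (by norm_num) (by norm_num)]
      have t1 : (0:ℝ) ≤ σ ^ k * (L^2 * L^2) := by positivity
      have h9 : (N:ℝ)^2 ≤ 9 * ((N:ℝ) - 2)^2 := by nlinarith
      have e1 : σ ^ k * ((N:ℝ))^2 * L^2 * L ^ 2 * π * 64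
          ≤ σ ^ k * ((N:ℝ))^2 * L^2 * L ^ 2 * 4 * 64 := by
        nlinarith [mul_nonneg (mul_nonneg t1 (by positivity : (0:ℝ) ≤ ((N:ℝ))^2))
          (by linarith : (0:ℝ) ≤ 4 - π)]
      have e2 : σ ^ k * ((N:ℝ))^2 * L^2 * L ^ 2 * 4 * 64
          ≤ σ ^ k * L^2 * (((N:ℝ)-2) * L)^2 * 2304 := by
        nlinarith [mul_le_mul_of_nonneg_left h9
          (by positivity : (0:ℝ) ≤ 256 * (σ ^ k * (L^2 * L^2)))]
      linarith
    calc 1 / 2304 * σ ^ k * (L ^ 2 * (N : ℝ) ^ 2) * (π * L ^ 2)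
        = σ ^ k * ((N:ℝ))^2 * L^2 * L ^ 2 * π / 2304 := by ring
      _ ≤ σ ^ k * L^2 * (((N:ℝ)-2) * L)^2 / 64 := key
      _ = σ ^ k * L ^ 2 / 16 * ((((N:ℝ) - 2) * L) / 2) ^ 2 := by ring
  have hfinal : π * L ^ 2 * w x
      ≤ π * L ^ 2 * (M - 1 / 2304 * σ ^ k * (N : ℝ) ^ (2 * k + 2)) := by
    have h2 : π * L ^ 2 * (M - 1 / 2304 * σ ^ k * (N : ℝ) ^ (2 * k + 2))
        = π * L ^ 2 * M - 1 / 2304 * σ ^ k * (N : ℝ) ^ (2 * k + 2) * (π * L ^ 2) := by ring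
    rw [h2]
    linarith
  have hπL2 : 0 < π * L ^ 2 := by positivity
  have := le_of_mul_le_mul_left hfinal hπL2
  linarith
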